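/- Let a1, a2 ∈ H_A and b1, b2 ∈ H_B be unit vectors with c_A = |⟨a1, a2⟩|² and c_B = |⟨b1, b2⟩|², and set ψ_j = a_j ⊗ b_j. Then for every (x_{1,A}, x_{2,A}) ∈ E_{c_A} and (x_{1,B}, x_{2,B}) ∈ E_{c_B}, there exist unit vectors α ∈ H_A and β ∈ H_B such that |⟨a_j, α⟩|² = x_{j,A} and |⟨b_j, β⟩|² = x_{j,B} for j = 1, 2; consequently the pure product state α ⊗ β satisfies |⟨ψ_j, α ⊗ β⟩|² = x_{j,A}·x_{j,B} for j = 1, 2. -/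

import Mathlib

open scoped ComplexInnerProductSpace
noncomputable section

/-- `HSp n` models a complex inner product space of dimension `n`. -/
abbrev HSp (n : ℕ) := EuclideanSpace ℂ (Fin n)

/-- `HT m n` models the tensor product `HSp m ⊗ HSp n`, with its induced inner product. -/
abbrev HT (m n : ℕ) := EuclideanSpace ℂ (Fin m × Fin n)

/-- The product (tensor) vector `a ⊗ b`. -/
def tmul {m n : ℕ} (a : HSp m) (b : HSp n) : HT m n :=
  (WithLp.equiv 2 _).symm fun p => a p.1 * b p.2

/-- `ψ` is a product vector. -/
def IsProd {m n : ℕ} (ψ : HT m n) : Prop := ∃ a b, ψ = tmul a b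

/-- The rank-one operator `|ψ⟩⟨ψ| : φ ↦ ⟨ψ, φ⟩ • ψ`; for a unit vector `ψ` this is the
orthogonal projection onto the span of `ψ`. -/
def rankOne {H : Type*} [NormedAddCommGroup H] [InnerProductSpace ℂ H] (ψ : H) :
    H →ₗ[ℂ] H := ((innerSL ℂ ψ).toLinearMap).smulRight ψ

/-- A density operator: positive semidefinite (self-adjoint) with trace one. -/
def IsDensity {H : Type*} [NormedAddCommGroup H] [InnerProductSpace ℂ H]
    [FiniteDimensional ℂ H] (ρ : H →ₗ[ℂ] H) : Prop :=
  LinearMap.IsSymmetric ρ ∧ (∀ x, 0 ≤ (⟪x, ρ x⟫).re) ∧ LinearMap.trace ℂ H ρ = 1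

/-- A separable density operator: a member of the convex hull of the set of rank-one
orthogonal projections onto unit product vectors. -/
def IsSepDensity {m n : ℕ} (σ : HT m n →ₗ[ℂ] HT m n) : Prop :=
  σ ∈ convexHull ℝ
    {P | ∃ (a : HSp m) (b : HSp n), ‖a‖ = 1 ∧ ‖b‖ = 1 ∧ P = rankOne (tmul a b)}

/-- The largest (real) eigenvalue `λmax` of an operator. -/
def lamMax {H : Type*} [NormedAddCommGroup H] [InnerProductSpace ℂ H]
    [FiniteDimensional ℂ H] (M : H →ₗ[ℂ] H) : ℝ :=
  sSup {t : ℝ | Module.End.HasEigenvalue M (t : ℂ)}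

/-- `sup { Tr(σ M) : σ a separable density operator }`. -/
def sepSup {m n : ℕ} (M : HT m n →ₗ[ℂ] HT m n) : ℝ :=
  sSup {t : ℝ | ∃ σ, IsSepDensity σ ∧ t = (LinearMap.trace ℂ _ (σ ∘ₗ M)).re}

/-- For `c ∈ [0,1]`, the region
`E_c = {(x1,x2) ∈ [0,1]² : (x1 + x2 − (1 − c))² ≤ 4·c·x1·x2}`. -/
def Ecal (c : ℝ) : Set (ℝ × ℝ) :=
  {x | x.1 ∈ Set.Icc (0 : ℝ) 1 ∧ x.2 ∈ Set.Icc (0 : ℝ) 1 ∧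
    (x.1 + x.2 - (1 - c)) ^ 2 ≤ 4 * c * x.1 * x.2}

set_option maxHeartbeats 1000000 in
lemma key {d : ℕ} (hd : 2 ≤ d) (a1 a2 : HSp d) (ha1 : ‖a1‖ = 1) (ha2 : ‖a2‖ = 1)
    {x1 x2 : ℝ} (hx1 : x1 ∈ Set.Icc (0:ℝ) 1) (hx2 : x2 ∈ Set.Icc (0:ℝ) 1)
    (hE : (x1 + x2 - (1 - ‖⟪a1, a2⟫‖ ^ 2)) ^ 2 ≤ 4 * ‖⟪a1, a2⟫‖ ^ 2 * x1 * x2) :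
    ∃ α : HSp d, ‖α‖ = 1 ∧ ‖⟪a1, α⟫‖ ^ 2 = x1 ∧ ‖⟪a2, α⟫‖ ^ 2 = x2 := by
  obtain ⟨hx10, hx11⟩ := hx1
  obtain ⟨hx20, hx21⟩ := hx2
  set s : ℂ := ⟪a1, a2⟫ with hs
  set c : ℝ := ‖s‖ ^ 2 with hc
  have hc0 : 0 ≤ c := by positivity
  have hsn : ‖s‖ ≤ 1 := by
    calc ‖s‖ ≤ ‖a1‖ * ‖a2‖ := norm_inner_le_norm a1 a2
    _ = 1 := by rw [ha1, ha2]; ring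
  have hc1 : c ≤ 1 := by nlinarith [norm_nonneg s]
  have hsc : Real.sqrt c = ‖s‖ := by rw [hc, Real.sqrt_sq (norm_nonneg s)]
  have ha1i : ⟪a1, a1⟫ = 1 := by
    rw [inner_self_eq_norm_sq_to_K, ha1]; norm_num
  have ha2i : ⟪a2, a2⟫ = 1 := by
    rw [inner_self_eq_norm_sq_to_K, ha2]; norm_num
  have hs21 : ⟪a2, a1⟫ = starRingEnd ℂ s := by rw [← inner_conj_symm]
  have hmulconj : s * starRingEnd ℂ s = ((c : ℝ) : ℂ) := by
    rw [Complex.mul_conj]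
    norm_cast
    rw [hc, ← Complex.sq_norm]
  -- find e
  obtain ⟨e, he1, hea1, hea2⟩ :
      ∃ e : HSp d, ‖e‖ = 1 ∧ ⟪a1, e⟫ = 0 ∧ ⟪a2, e⟫ = ((Real.sqrt (1 - c) : ℝ) : ℂ) := by
    set w : HSp d := a2 - s • a1 with hw
    have hww : ⟪w, w⟫ = (((1 - c : ℝ)) : ℂ) := by
      simp only [hw, inner_sub_left, inner_sub_right, inner_smul_left, inner_smul_right,
        ha1i, ha2i, hs21]
      push_cast
      rw [mul_comm (starRingEnd ℂ s) s] at *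
      rw [mul_one]
      rw [hmulconj]
      push_cast
      ring
    have hwn : ‖w‖ ^ 2 = 1 - c := by
      have := inner_self_eq_norm_sq (𝕜 := ℂ) w
      rw [hww] at this
      simpa using this.symm
    rcases lt_or_eq_of_le hc1 with hlt | heq
    · -- c < 1
      have hwpos : 0 < ‖w‖ := by
        by_contra h
        push_neg at h
        have h0 : ‖w‖ = 0 := le_antisymm h (norm_nonneg _)
        rw [h0] at hwn
        nlinarith
      have hwval : ‖w‖ = Real.sqrt (1 - c) := by
        rw [← hwn, Real.sqrt_sq (norm_nonneg w)]
      refine ⟨((‖w‖ : ℂ))⁻¹ • w, ?_, ?_, ?_⟩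
      · rw [norm_smul]
        simp [hwpos.ne']
      · rw [inner_smul_right]
        have h1w : ⟪a1, w⟫ = 0 := by
          simp [hw, inner_sub_right, inner_smul_right, ha1i, ← hs, ha1]
        simp [h1w]
      · rw [inner_smul_right]
        have h2w : ⟪a2, w⟫ = (((1 - c : ℝ)) : ℂ) := by
          simp only [hw, inner_sub_right, inner_smul_right, ha2i, hs21]
          rw [hmulconj]
          push_cast; ring
        have hpos : (0:ℝ) < Real.sqrt (1 - c) := Real.sqrt_pos.2 (by linarith)
        have hne : ((Real.sqrt (1 - c) : ℝ) : ℂ) ≠ 0 := by exact_mod_cast hpos.ne'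
        have h1c : ((1 - c : ℝ) : ℂ) = (Real.sqrt (1-c) : ℂ) * (Real.sqrt (1-c) : ℂ) := by
          norm_cast
          exact (Real.mul_self_sqrt (by linarith : (0:ℝ) ≤ 1 - c)).symm
        rw [h2w, hwval, h1c]
        field_simp
      -- done c<1
    · -- c = 1
      have hw0 : w = 0 := by
        have : ‖w‖ ^ 2 = 0 := by rw [hwn, ← heq]; ring
        have : ‖w‖ = 0 := by nlinarith [norm_nonneg w]
        exact norm_eq_zero.1 this
      have ha2s : a2 = s • a1 := by
        have := sub_eq_zero.1 (hw ▸ hw0 : a2 - s • a1 = 0)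
        exact this
      have ha10 : a1 ≠ 0 := by intro h; rw [h] at ha1; simp at ha1
      -- unit vector orthogonal to a1
      have hK : Module.finrank ℂ (ℂ ∙ a1) = 1 := finrank_span_singleton ha10
      have h2 : Module.finrank ℂ (HSp d) = d := finrank_euclideanSpace_fin
      have hsum := (ℂ ∙ a1).finrank_add_finrank_orthogonal
      have hposr : 0 < Module.finrank ℂ ((ℂ ∙ a1)ᗮ) := by omega
      obtain ⟨v, hv, hv0⟩ := Submodule.exists_mem_ne_zero_of_ne_bot
        (p := (ℂ ∙ a1)ᗮ) (by intro h; rw [h] at hposr; simp at hposr)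
      have hv1 : ⟪a1, v⟫ = 0 :=
        (Submodule.mem_orthogonal _ _).1 hv a1 (Submodule.mem_span_singleton_self a1)
      refine ⟨((‖v‖ : ℂ))⁻¹ • v, ?_, ?_, ?_⟩
      · rw [norm_smul]; simp [norm_ne_zero_iff.2 hv0]
      · rw [inner_smul_right, hv1, mul_zero]
      · rw [ha2s, inner_smul_left, inner_smul_right, hv1, ← heq]
        simp
  -- construction of α
  set A : ℝ := Real.sqrt c * Real.sqrt x1 with hA
  set B : ℝ := Real.sqrt (1 - c) * Real.sqrt (1 - x1) with hB
  have hA0 : 0 ≤ A := by positivity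
  have hB0 : 0 ≤ B := by positivity
  have hA2 : A ^ 2 = c * x1 := by
    rw [hA, mul_pow, Real.sq_sqrt hc0, Real.sq_sqrt hx10]
  have hB2 : B ^ 2 = (1 - c) * (1 - x1) := by
    rw [hB, mul_pow, Real.sq_sqrt (by linarith), Real.sq_sqrt (by linarith)]
  have hineq : (x2 - A ^ 2 - B ^ 2) ^ 2 ≤ (2 * A * B) ^ 2 := by
    rw [hA2, hB2]
    nlinarith [hE]
  set k : ℝ := (x2 - A ^ 2 - B ^ 2) / (2 * A * B) with hkdef
  have hk : 2 * A * B * k = x2 - A ^ 2 - B ^ 2 := by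
    by_cases h0 : 2 * A * B = 0
    · have h00 : (2 * A * B) ^ 2 = 0 := by rw [h0]; ring
      rw [h0, zero_mul]
      nlinarith [hineq, sq_nonneg (x2 - A ^ 2 - B ^ 2)]
    · rw [hkdef]; exact mul_div_cancel₀ (x2 - A ^ 2 - B ^ 2) h0
  have hk2 : k ^ 2 ≤ 1 := by
    by_cases h0 : 2 * A * B = 0
    · simp [hkdef, h0]
    · have habs : (2 * A * B * k) ^ 2 ≤ (2 * A * B) ^ 2 := by rw [hk]; exact hineq
      have hp : 0 < (2 * A * B) ^ 2 := by
        have := lt_of_le_of_ne (by positivity : (0:ℝ) ≤ 2 * A * B) (Ne.symm h0)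
        positivity
      nlinarith
  set z' : ℂ := (k : ℂ) + (Real.sqrt (1 - k ^ 2) : ℂ) * Complex.I with hz'
  have hz're : z'.re = k := by simp [hz']
  have hz'im : z'.im = Real.sqrt (1 - k ^ 2) := by simp [hz']
  have hsqk : Real.sqrt (1 - k ^ 2) ^ 2 = 1 - k ^ 2 := Real.sq_sqrt (by linarith)
  have hz'n : ‖z'‖ ^ 2 = 1 := by
    rw [Complex.sq_norm, Complex.normSq_apply, hz're, hz'im]
    nlinarith
  have hz'n1 : ‖z'‖ = 1 := by
    rw [← Real.sqrt_sq (norm_nonneg z'), hz'n, Real.sqrt_one]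
  set u : ℂ := if s = 0 then 1 else (starRingEnd ℂ s) / ((Real.sqrt c : ℝ) : ℂ) with hu
  have hun : ‖u‖ = 1 := by
    rw [hu]
    split_ifs with h
    · simp
    · rw [norm_div, RCLike.norm_conj, Complex.norm_real,
        Real.norm_of_nonneg (Real.sqrt_nonneg c), hsc]
      exact div_self (norm_ne_zero_iff.2 h)
  have hAu : (Real.sqrt x1 : ℂ) * starRingEnd ℂ s = (A : ℂ) * u := by
    rw [hu]
    split_ifs with h
    · simp [h, hA]
      left
      rw [hsc, h]
      simp
    · have hsne : ((Real.sqrt c : ℝ) : ℂ) ≠ 0 := by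
        rw [hsc]
        exact_mod_cast norm_ne_zero_iff.2 h
      rw [hA]
      push_cast
      field_simp
  set α : HSp d := (Real.sqrt x1 : ℂ) • a1 + ((Real.sqrt (1 - x1) : ℂ) * (u * z')) • e with hα
  have hinner1 : ⟪a1, α⟫ = (Real.sqrt x1 : ℂ) := by
    rw [hα, inner_add_right, inner_smul_right, inner_smul_right, ha1i, hea1, mul_one, mul_zero,
      add_zero]
  have hinner2 : ⟪a2, α⟫ = u * ((A : ℂ) + (B : ℂ) * z') := by
    rw [hα, inner_add_right, inner_smul_right, inner_smul_right, hs21, hea2]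
    rw [mul_comm ((Real.sqrt x1 : ℂ)) (starRingEnd ℂ s)]
    rw [mul_comm (starRingEnd ℂ s) (Real.sqrt x1 : ℂ), hAu, hB]
    push_cast
    ring
  refine ⟨α, ?_, ?_, ?_⟩
  · -- norm α = 1
    have horth : ⟪(Real.sqrt x1 : ℂ) • a1, ((Real.sqrt (1 - x1) : ℂ) * (u * z')) • e⟫ = 0 := by
      rw [inner_smul_left, inner_smul_right, hea1]
      ring
    have hsq : ‖α‖ ^ 2 = ‖(Real.sqrt x1 : ℂ) • a1‖ ^ 2 +
        ‖((Real.sqrt (1 - x1) : ℂ) * (u * z')) • e‖ ^ 2 := by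
      rw [hα, @norm_add_sq ℂ _ _ _ _ _ _, horth]
      simp
    rw [norm_smul, norm_smul, ha1, he1, mul_one, mul_one, norm_mul, norm_mul, hun, hz'n1] at hsq
    rw [Complex.norm_real, Complex.norm_real, Real.norm_of_nonneg (Real.sqrt_nonneg _),
      Real.norm_of_nonneg (Real.sqrt_nonneg _)] at hsq
    have : ‖α‖ ^ 2 = 1 := by
      rw [hsq, mul_one, mul_one, Real.sq_sqrt hx10, Real.sq_sqrt (by linarith)]
      ring
    rw [← Real.sqrt_sq (norm_nonneg α), this, Real.sqrt_one]
  · rw [hinner1, Complex.norm_real, Real.norm_of_nonneg (Real.sqrt_nonneg _), Real.sq_sqrt hx10]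
  · rw [hinner2, norm_mul, hun, one_mul]
    have hre : ((A : ℂ) + (B : ℂ) * z').re = A + B * k := by
      simp [hz']
    have him : ((A : ℂ) + (B : ℂ) * z').im = B * Real.sqrt (1 - k ^ 2) := by
      simp [hz']
    rw [Complex.sq_norm, Complex.normSq_apply, hre, him]
    nlinarith [hk, hsqk]

lemma inner_tmul {m n : ℕ} (a α : HSp m) (b β : HSp n) :
    ⟪tmul a b, tmul α β⟫ = ⟪a, α⟫ * ⟪b, β⟫ := by
  simp only [tmul, PiLp.inner_apply, RCLike.inner_apply, WithLp.equiv_symm_apply, PiLp.toLp_apply]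
  rw [Fintype.sum_prod_type, Finset.sum_mul_sum]
  apply Finset.sum_congr rfl
  intro i _
  apply Finset.sum_congr rfl
  intro j _
  simp only [map_mul]
  ring

/-- For unit vectors `a1, a2, b1, b2` with local fidelities
`c_A = |⟨a1,a2⟩|²`, `c_B = |⟨b1,b2⟩|²` and `ψj = aj ⊗ bj`: for every
`(x_{1,A},x_{2,A}) ∈ E_{c_A}` and `(x_{1,B},x_{2,B}) ∈ E_{c_B}` there exist unit vectors
`α, β` with `|⟨aj,α⟩|² = x_{j,A}` and `|⟨bj,β⟩|² = x_{j,B}` for `j = 1,2`; consequently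
`|⟨ψj, α ⊗ β⟩|² = x_{j,A}·x_{j,B}` for `j = 1,2`. -/
theorem stmt_14 {dA dB : ℕ} (hdA : 2 ≤ dA) (hdB : 2 ≤ dB)
    (a1 a2 : HSp dA) (b1 b2 : HSp dB)
    (ha1 : ‖a1‖ = 1) (ha2 : ‖a2‖ = 1) (hb1 : ‖b1‖ = 1) (hb2 : ‖b2‖ = 1)
    (cA cB : ℝ) (hcA : cA = ‖⟪a1, a2⟫‖ ^ 2) (hcB : cB = ‖⟪b1, b2⟫‖ ^ 2) :
    ∀ u ∈ Ecal cA, ∀ v ∈ Ecal cB,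
      ∃ (α : HSp dA) (β : HSp dB), ‖α‖ = 1 ∧ ‖β‖ = 1 ∧
        ‖⟪a1, α⟫‖ ^ 2 = u.1 ∧ ‖⟪a2, α⟫‖ ^ 2 = u.2 ∧
        ‖⟪b1, β⟫‖ ^ 2 = v.1 ∧ ‖⟪b2, β⟫‖ ^ 2 = v.2 ∧
        ‖⟪tmul a1 b1, tmul α β⟫‖ ^ 2 = u.1 * v.1 ∧
        ‖⟪tmul a2 b2, tmul α β⟫‖ ^ 2 = u.2 * v.2 := by
  
  intro u hu v hv
  obtain ⟨hu1, hu2, huE⟩ := hu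
  obtain ⟨hv1, hv2, hvE⟩ := hv
  rw [hcA] at huE
  rw [hcB] at hvE
  obtain ⟨α, hα1, hα2, hα3⟩ := key hdA a1 a2 ha1 ha2 hu1 hu2 huE
  obtain ⟨β, hβ1, hβ2, hβ3⟩ := key hdB b1 b2 hb1 hb2 hv1 hv2 hvE
  refine ⟨α, β, hα1, hβ1, hα2, hα3, hβ2, hβ3, ?_, ?_⟩
  · rw [inner_tmul, norm_mul, mul_pow, hα2, hβ2]
  · rw [inner_tmul, norm_mul, mul_pow, hα3, hβ3]
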